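/- Let A ∈ ℝ^{n×n} be column-stochastic, 0 < c < 1, and S ∈ ℝ^{n×n} positive semi-definite with all entries in [0,1]. Then F(S) = c·AᵀSA − c·diag(AᵀSA) + I is positive semi-definite. -/

import Mathlib

open Matrix

def ColStochastic {n : ℕ} (A : Matrix (Fin n) (Fin n) ℝ) : Prop :=
  (∀ i j, 0 ≤ A i j) ∧ ∀ j, ∑ i, A i j = 1

theorem stmt_6 {n : ℕ} (c : ℝ) (hc0 : 0 < c) (hc1 : c < 1)
    (A : Matrix (Fin n) (Fin n) ℝ) (hA : ColStochastic A)
    (S : Matrix (Fin n) (Fin n) ℝ) (hpsd : S.PosSemidef)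
    (hrange : ∀ i j, 0 ≤ S i j ∧ S i j ≤ 1) :
    (c • (Aᵀ * S * A) - c • Matrix.diagonal (fun i => (Aᵀ * S * A) i i) + 1).PosSemidef := by
  set M := Aᵀ * S * A with hM
  have hMpsd : M.PosSemidef := by
    have : (Aᴴ * S * A).PosSemidef := hpsd.conjTranspose_mul_mul_same A
    simpa [conjTranspose_eq_transpose_of_trivial] using this
  have hdiag : ∀ i, M i i ≤ 1 := by
    intro i
    have : M i i = ∑ k, ∑ l, A k i * S k l * A l i := by
      have hsym : ∀ k l, S l k = S k l := fun k l => by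
        have := congrFun (congrFun hpsd.1.eq k) l
        simpa [conjTranspose_apply] using this
      simp [hM, Matrix.mul_apply, Finset.sum_mul, transpose_apply]
      congr 1; ext k; congr 1; ext l; rw [hsym]; ring
    rw [this]
    calc ∑ k, ∑ l, A k i * S k l * A l i
        ≤ ∑ k, ∑ l, A k i * A l i := by
          apply Finset.sum_le_sum; intro k _
          apply Finset.sum_le_sum; intro l _
          have h1 := hA.1 k i
          have h2 := hA.1 l i
          have h3 := (hrange k l).2
          have := mul_le_mul_of_nonneg_right (mul_le_mul_of_nonneg_left h3 h1) h2
          simpa using this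
      _ = (∑ k, A k i) * (∑ l, A l i) := by rw [Finset.sum_mul_sum]
      _ = 1 := by rw [hA.2 i]; ring
  have key : c • M - c • Matrix.diagonal (fun i => M i i) + 1
      = c • M + Matrix.diagonal (fun i => 1 - c * M i i) := by
    ext i j
    by_cases h : i = j <;>
      simp [Matrix.diagonal, Matrix.one_apply, h, sub_eq_add_neg]
  rw [key]
  have hcM : (c • M).PosSemidef := by
    constructor
    · show (c • M)ᴴ = c • M
      have := hMpsd.1.eq
      simp only [conjTranspose_smul, star_trivial]
      rw [this]
    · intro x
      have := hMpsd.2 x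
      have e : (x.sum fun i xi => x.sum fun j xj => star xi * (c • M) i j * xj)
          = c * (x.sum fun i xi => x.sum fun j xj => star xi * M i j * xj) := by
        simp only [Finsupp.sum, Finset.mul_sum, Matrix.smul_apply, smul_eq_mul]
        exact Finset.sum_congr rfl fun _ _ => Finset.sum_congr rfl fun _ _ => by ring
      rw [e]
      exact mul_nonneg hc0.le this
  apply PosSemidef.add hcM
  apply posSemidef_diagonal_iff.mpr
  intro i
  have h0 : 0 ≤ M i i := by
    exact hMpsd.diag_nonneg
  nlinarith [hdiag i]
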